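/- arXiv:0706.0222 — 2 statements merged into one kernel-verified Lean document; each statement's English description precedes it below -/
import Mathlib

section
/- The Lie algebra L_{6,1} (the inhomogeneous algebra Iso(3)) is a contraction of so(4), the real Lie algebra of 4×4 real skew-symmetric matrices with the commutator bracket. -/
open Filter Topology

/-- `IsContraction g h` : the Lie algebra `h` is a contraction of the Lie algebra `g`. -/
def IsContraction (g h : Type*) [LieRing g] [LieAlgebra ℝ g] [TopologicalSpace g]
    [LieRing h] [LieAlgebra ℝ h] : Prop :=
  ∃ (f : ℝ → (g ≃ₗ[ℝ] g)) (e : g ≃ₗ[ℝ] h), ∀ X Y : g,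
    Filter.Tendsto (fun t : ℝ => (f t).symm ⁅f t X, f t Y⁆) Filter.atTop
      (nhds (e.symm ⁅e X, e Y⁆))

/-- Structure constants of `L_{6,1}` (upper triangular part, 0-based indices). -/
def L61T {L : Type*} [AddCommGroup L] [Module ℝ L] (b : Fin 6 → L) : Fin 6 → Fin 6 → L :=
  fun i j =>
    if i = 1 ∧ j = 2 then b 0 else
    if i = 0 ∧ j = 1 then b 2 else
    if i = 0 ∧ j = 2 then -b 1 else
    if i = 0 ∧ j = 4 then b 5 else
    if i = 0 ∧ j = 5 then -b 4 else
    if i = 1 ∧ j = 3 then -b 5 else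
    if i = 1 ∧ j = 5 then b 3 else
    if i = 2 ∧ j = 3 then b 4 else
    if i = 2 ∧ j = 4 then -b 3 else 0

attribute [local instance 100] LieRing.ofAssociativeRing

/-- `so(4)`: the Lie algebra of 4×4 real skew-symmetric matrices (`Aᵀ·1 + 1·A = 0`). -/
noncomputable abbrev so4 : LieSubalgebra ℝ (Matrix (Fin 4) (Fin 4) ℝ) :=
  skewAdjointMatricesLieSubalgebra (1 : Matrix (Fin 4) (Fin 4) ℝ)

namespace L61Aux

open Matrix
open Module

@[simp]
lemma my_cons_val_five {α : Type*} {m : ℕ} (x : α) (u : Fin (m+5) → α) :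
    vecCons x u 5 = vecHead (vecTail (vecTail (vecTail (vecTail u)))) := rfl

noncomputable def E (a b : Fin 4) : Matrix (Fin 4) (Fin 4) ℝ := Matrix.single a b 1

lemma E_transpose (a b : Fin 4) : (E a b)ᵀ = E b a := by
  ext i j
  simp [E, Matrix.single, and_comm]

noncomputable def Mk : Fin 6 → Matrix (Fin 4) (Fin 4) ℝ :=
  ![E 2 1 - E 1 2, E 0 2 - E 2 0, E 1 0 - E 0 1, E 0 3 - E 3 0, E 1 3 - E 3 1, E 2 3 - E 3 2]

lemma Mk_mem (k : Fin 6) : Mk k ∈ so4 := by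
  rw [mem_skewAdjointMatricesLieSubalgebra, mem_skewAdjointMatricesSubmodule]
  show (Mk k)ᵀ * 1 = 1 * (-(Mk k))
  rw [mul_one, one_mul]
  fin_cases k <;>
    simp [Mk, Matrix.vecHead, Matrix.vecTail, Matrix.transpose_sub, E_transpose]

noncomputable def Bas (k : Fin 6) : ↥so4 := ⟨Mk k, Mk_mem k⟩

@[simp] lemma so4_coe_smul (a : ℝ) (S : ↥so4) :
    ((a • S : ↥so4) : Matrix (Fin 4) (Fin 4) ℝ) = a • (S : Matrix (Fin 4) (Fin 4) ℝ) := rfl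
@[simp] lemma so4_coe_add (S T : ↥so4) :
    ((S + T : ↥so4) : Matrix (Fin 4) (Fin 4) ℝ)
      = (S : Matrix (Fin 4) (Fin 4) ℝ) + (T : Matrix (Fin 4) (Fin 4) ℝ) := rfl
@[simp] lemma so4_coe_neg (S : ↥so4) :
    ((-S : ↥so4) : Matrix (Fin 4) (Fin 4) ℝ) = -(S : Matrix (Fin 4) (Fin 4) ℝ) := rfl
@[simp] lemma so4_coe_zero : ((0 : ↥so4) : Matrix (Fin 4) (Fin 4) ℝ) = 0 := rfl
@[simp] lemma Bas_coe (k : Fin 6) : ((Bas k : ↥so4) : Matrix (Fin 4) (Fin 4) ℝ) = Mk k := rfl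

noncomputable def brT : Fin 6 → Fin 6 → ↥so4 := fun i =>
  ![ ![0, Bas 2, -Bas 1, 0, Bas 5, -Bas 4],
     ![-Bas 2, 0, Bas 0, -Bas 5, 0, Bas 3],
     ![Bas 1, -Bas 0, 0, Bas 4, -Bas 3, 0],
     ![0, Bas 5, -Bas 4, 0, Bas 2, -Bas 1],
     ![-Bas 5, 0, Bas 3, -Bas 2, 0, Bas 0],
     ![Bas 4, -Bas 3, 0, Bas 1, -Bas 0, 0] ] i

set_option maxHeartbeats 2000000 in
lemma br_table (i j : Fin 6) : ⁅Bas i, Bas j⁆ = brT i j := by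
  fin_cases i <;> fin_cases j <;>
    · apply Subtype.ext
      rw [LieSubalgebra.coe_bracket, Ring.lie_def]
      simp (config := { decide := true }) [brT, Bas, Mk, Matrix.vecHead, Matrix.vecTail,
        NegMemClass.coe_neg, ZeroMemClass.coe_zero, sub_mul, mul_sub, E,
        Matrix.single_mul_single_same, Matrix.single_mul_single_of_ne]
      try abel

section WithL

variable {L : Type} [LieRing L] [LieAlgebra ℝ L]

noncomputable def psi (b : Basis (Fin 6) ℝ L) : L →ₗ[ℝ] ↥so4 := b.constr ℝ Bas

noncomputable def phi (b : Basis (Fin 6) ℝ L) : ↥so4 →ₗ[ℝ] L where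
  toFun S := (S : Matrix (Fin 4) (Fin 4) ℝ) 2 1 • b 0 + (S : Matrix (Fin 4) (Fin 4) ℝ) 0 2 • b 1
    + (S : Matrix (Fin 4) (Fin 4) ℝ) 1 0 • b 2 + (S : Matrix (Fin 4) (Fin 4) ℝ) 0 3 • b 3
    + (S : Matrix (Fin 4) (Fin 4) ℝ) 1 3 • b 4 + (S : Matrix (Fin 4) (Fin 4) ℝ) 2 3 • b 5
  map_add' S T := by
    simp only [AddMemClass.coe_add, Matrix.add_apply, add_smul]
    abel
  map_smul' a S := by
    simp only [so4_coe_smul, Matrix.smul_apply, smul_eq_mul, RingHom.id_apply, smul_add,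
      smul_smul]

lemma phi_Bas (b : Basis (Fin 6) ℝ L) (k : Fin 6) : phi b (Bas k) = b k := by
  fin_cases k <;>
    · show _ • b 0 + _ • b 1 + _ • b 2 + _ • b 3 + _ • b 4 + _ • b 5 = _
      simp (config := { decide := true }) [Bas, Mk, Matrix.vecHead, Matrix.vecTail, E,
        Matrix.sub_apply, Matrix.single_apply_same, Matrix.single_apply_of_ne]

lemma phi_psi (b : Basis (Fin 6) ℝ L) : (phi b).comp (psi b) = LinearMap.id := by
  apply b.ext
  intro i
  simp [psi, Basis.constr_basis, phi_Bas]

lemma psi_phi (b : Basis (Fin 6) ℝ L) : (psi b).comp (phi b) = LinearMap.id := by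
  apply LinearMap.ext
  intro S
  have hsk : ∀ i j, (S : Matrix (Fin 4) (Fin 4) ℝ) j i = -(S : Matrix (Fin 4) (Fin 4) ℝ) i j := by
    intro i j
    have h0 : (S : Matrix (Fin 4) (Fin 4) ℝ) ∈
        skewAdjointMatricesSubmodule (1 : Matrix (Fin 4) (Fin 4) ℝ) :=
      (mem_skewAdjointMatricesLieSubalgebra _ _).mp S.2
    rw [mem_skewAdjointMatricesSubmodule] at h0
    unfold Matrix.IsSkewAdjoint Matrix.IsAdjointPair at h0
    rw [mul_one, one_mul] at h0
    have := congrFun (congrFun h0 i) j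
    simpa [Matrix.transpose_apply] using this
  show psi b (phi b S) = S
  have hphi : phi b S = (S : Matrix (Fin 4) (Fin 4) ℝ) 2 1 • b 0
      + (S : Matrix (Fin 4) (Fin 4) ℝ) 0 2 • b 1 + (S : Matrix (Fin 4) (Fin 4) ℝ) 1 0 • b 2
      + (S : Matrix (Fin 4) (Fin 4) ℝ) 0 3 • b 3 + (S : Matrix (Fin 4) (Fin 4) ℝ) 1 3 • b 4
      + (S : Matrix (Fin 4) (Fin 4) ℝ) 2 3 • b 5 := rfl
  rw [hphi]
  apply Subtype.ext
  simp only [psi, map_add, _root_.map_smul, Basis.constr_basis, so4_coe_add, so4_coe_smul,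
    Bas_coe]
  ext i j
  fin_cases i <;> fin_cases j <;>
    · simp (config := { decide := true }) [Mk, Matrix.vecHead, Matrix.vecTail, E,
        Matrix.sub_apply, Matrix.add_apply, Matrix.smul_apply,
        Matrix.single_apply_same, Matrix.single_apply_of_ne]
      try linarith [hsk 0 0, hsk 0 1, hsk 0 2, hsk 0 3, hsk 1 1, hsk 1 2, hsk 1 3,
        hsk 2 2, hsk 2 3, hsk 3 3, hsk 1 0, hsk 2 0, hsk 3 0, hsk 2 1, hsk 3 1, hsk 3 2]

noncomputable def eqv (b : Basis (Fin 6) ℝ L) : ↥so4 ≃ₗ[ℝ] L :=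
  LinearEquiv.ofLinear (phi b) (psi b) (phi_psi b) (psi_phi b)

lemma eqv_Bas (b : Basis (Fin 6) ℝ L) (k : Fin 6) : eqv b (Bas k) = b k := phi_Bas b k

lemma eqv_symm_b (b : Basis (Fin 6) ℝ L) (k : Fin 6) : (eqv b).symm (b k) = Bas k := by
  show psi b (b k) = Bas k
  simp [psi, Basis.constr_basis]

/-- the scaling factors -/
noncomputable def sss (c : ℝ) : Fin 6 → ℝ := ![1, 1, 1, c, c, c]

lemma sss_ne {c : ℝ} (hc : c ≠ 0) (k : Fin 6) : sss c k ≠ 0 := by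
  fin_cases k <;> simp [sss, Matrix.vecHead, Matrix.vecTail, hc]

noncomputable def dL (b : Basis (Fin 6) ℝ L) (c : ℝ) (hc : c ≠ 0) : L ≃ₗ[ℝ] L :=
  LinearEquiv.ofLinear (b.constr ℝ fun k => sss c k • b k)
    (b.constr ℝ fun k => (sss c k)⁻¹ • b k)
    (by
      apply b.ext
      intro i
      simp [Basis.constr_basis, smul_smul, mul_inv_cancel₀ (sss_ne hc i),
        inv_mul_cancel₀ (sss_ne hc i)])
    (by
      apply b.ext
      intro i
      simp [Basis.constr_basis, smul_smul, mul_inv_cancel₀ (sss_ne hc i),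
        inv_mul_cancel₀ (sss_ne hc i)])

noncomputable def fT (b : Basis (Fin 6) ℝ L) (c : ℝ) (hc : c ≠ 0) : ↥so4 ≃ₗ[ℝ] ↥so4 :=
  (eqv b).trans ((dL b c hc).trans (eqv b).symm)

lemma fT_Bas (b : Basis (Fin 6) ℝ L) (c : ℝ) (hc : c ≠ 0) (k : Fin 6) :
    fT b c hc (Bas k) = sss c k • Bas k := by
  show (eqv b).symm (dL b c hc (eqv b (Bas k))) = _
  rw [eqv_Bas]
  show (eqv b).symm ((b.constr ℝ fun k => sss c k • b k) (b k)) = _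
  rw [Basis.constr_basis, _root_.map_smul, eqv_symm_b]

lemma fT_symm_Bas (b : Basis (Fin 6) ℝ L) (c : ℝ) (hc : c ≠ 0) (k : Fin 6) :
    (fT b c hc).symm (Bas k) = (sss c k)⁻¹ • Bas k := by
  show (eqv b).symm ((dL b c hc).symm (eqv b (Bas k))) = _
  rw [eqv_Bas]
  show (eqv b).symm ((b.constr ℝ fun k => (sss c k)⁻¹ • b k) (b k)) = _
  rw [Basis.constr_basis, _root_.map_smul, eqv_symm_b]

/-- the residual quadratic term -/
noncomputable def Rt : Fin 6 → Fin 6 → ↥so4 := fun i =>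
  ![ ![0, 0, 0, 0, 0, 0],
     ![0, 0, 0, 0, 0, 0],
     ![0, 0, 0, 0, 0, 0],
     ![0, 0, 0, 0, Bas 2, -Bas 1],
     ![0, 0, 0, -Bas 2, 0, Bas 0],
     ![0, 0, 0, Bas 1, -Bas 0, 0] ] i

noncomputable def Rb (b : Basis (Fin 6) ℝ L) : ↥so4 →ₗ[ℝ] ↥so4 →ₗ[ℝ] ↥so4 :=
  (b.map (eqv b).symm).constr ℝ fun i => (b.map (eqv b).symm).constr ℝ fun j => Rt i j

lemma map_eqv_symm (b : Basis (Fin 6) ℝ L) (k : Fin 6) : (b.map (eqv b).symm) k = Bas k := by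
  rw [Basis.map_apply, eqv_symm_b]

lemma Rb_Bas (b : Basis (Fin 6) ℝ L) (i j : Fin 6) : Rb b (Bas i) (Bas j) = Rt i j := by
  rw [← map_eqv_symm b i, ← map_eqv_symm b j, Rb, Basis.constr_basis, Basis.constr_basis]

/-- pullback of a bracket along a linear equivalence, as a bilinear map -/
noncomputable def pullBr {M : Type*} [LieRing M] [LieAlgebra ℝ M]
    (g : ↥so4 ≃ₗ[ℝ] M) : ↥so4 →ₗ[ℝ] ↥so4 →ₗ[ℝ] ↥so4 where
  toFun X :=
    { toFun := fun Y => g.symm ⁅g X, g Y⁆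
      map_add' := fun Y Z => by simp [lie_add]
      map_smul' := fun a Y => by simp }
  map_add' X X' := by
    ext Y
    simp [add_lie]
  map_smul' a X := by
    ext Y
    simp [smul_lie]

/-- full bracket table in `L` -/
noncomputable def LT (b : Basis (Fin 6) ℝ L) : Fin 6 → Fin 6 → L := fun i =>
  ![ ![0, b 2, -b 1, 0, b 5, -b 4],
     ![-b 2, 0, b 0, -b 5, 0, b 3],
     ![b 1, -b 0, 0, b 4, -b 3, 0],
     ![0, b 5, -b 4, 0, 0, 0],
     ![-b 5, 0, b 3, 0, 0, 0],
     ![b 4, -b 3, 0, 0, 0, 0] ] i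

set_option maxHeartbeats 2000000 in
lemma LT_eq (b : Basis (Fin 6) ℝ L) (i j : Fin 6) (h : i < j) : L61T (⇑b) i j = LT b i j := by
  revert h
  fin_cases i <;> fin_cases j <;> intro h <;>
    first
      | exact absurd h (by decide)
      | simp (config := { decide := true }) [L61T, LT, Matrix.vecHead, Matrix.vecTail]

lemma LT_diag (b : Basis (Fin 6) ℝ L) (i : Fin 6) : LT b i i = 0 := by
  fin_cases i <;> simp [LT, Matrix.vecHead, Matrix.vecTail]

set_option maxHeartbeats 2000000 in
lemma LT_skew (b : Basis (Fin 6) ℝ L) (i j : Fin 6) : -(LT b j i) = LT b i j := by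
  fin_cases i <;> fin_cases j <;> simp [LT, Matrix.vecHead, Matrix.vecTail]

lemma bracket_b (b : Basis (Fin 6) ℝ L)
    (hL : ∀ i j : Fin 6, i < j → ⁅b i, b j⁆ = L61T (⇑b) i j) (i j : Fin 6) :
    ⁅b i, b j⁆ = LT b i j := by
  rcases lt_trichotomy i j with h | h | h
  · rw [hL i j h, LT_eq b i j h]
  · subst h
    rw [lie_self, LT_diag]
  · rw [← lie_skew, hL j i h, LT_eq b j i h, LT_skew]

set_option maxHeartbeats 2000000 in
lemma key (b : Basis (Fin 6) ℝ L)
    (hL : ∀ i j : Fin 6, i < j → ⁅b i, b j⁆ = L61T (⇑b) i j) (c : ℝ) (hc : c ≠ 0) :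
    pullBr (fT b c hc) = pullBr (eqv b) + c ^ 2 • Rb b := by
  apply Basis.ext (b.map (eqv b).symm)
  intro i
  apply Basis.ext (b.map (eqv b).symm)
  intro j
  rw [map_eqv_symm, map_eqv_symm]
  have expand : ∀ i j : Fin 6,
      pullBr (fT b c hc) (Bas i) (Bas j) =
        (sss c i * (sss c j)) • (fT b c hc).symm (brT i j) := by
    intro i j
    show (fT b c hc).symm ⁅fT b c hc (Bas i), fT b c hc (Bas j)⁆ = _
    rw [fT_Bas, fT_Bas, smul_lie, lie_smul, br_table, smul_smul, _root_.map_smul]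
  have expand2 : ∀ i j : Fin 6,
      (pullBr (eqv b) + c ^ 2 • Rb b) (Bas i) (Bas j) =
        (eqv b).symm (LT b i j) + c ^ 2 • Rt i j := by
    intro i j
    have : pullBr (eqv b) (Bas i) (Bas j) = (eqv b).symm (LT b i j) := by
      show (eqv b).symm ⁅eqv b (Bas i), eqv b (Bas j)⁆ = _
      rw [eqv_Bas, eqv_Bas, bracket_b b hL]
    simp [LinearMap.add_apply, LinearMap.smul_apply, this, Rb_Bas]
  rw [expand, expand2]
  fin_cases i <;> fin_cases j <;>
    · simp [brT, LT, Rt, sss, Matrix.vecHead, Matrix.vecTail, fT_symm_Bas,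
        map_neg, map_zero, eqv_symm_b, smul_smul, pow_two, mul_inv_cancel₀ hc, hc]

end WithL

end L61Aux

/-- `L_{6,1} = Iso(3)` is a contraction of `so(4)`. -/
theorem L61_is_contraction_of_so4
    (L : Type) [LieRing L] [LieAlgebra ℝ L] (b : Module.Basis (Fin 6) ℝ L)
    (hL : ∀ i j : Fin 6, i < j → ⁅b i, b j⁆ = L61T (⇑b) i j) :
    IsContraction (↥so4) L := by
  classical
  open L61Aux in
  have hct : ∀ t : ℝ, (max 1 t)⁻¹ ≠ 0 := fun t => by positivity
  refine ⟨fun t => fT b (max 1 t)⁻¹ (hct t), eqv b, fun X Y => ?_⟩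
  have hkey : ∀ t : ℝ,
      (fT b (max 1 t)⁻¹ (hct t)).symm ⁅fT b (max 1 t)⁻¹ (hct t) X, fT b (max 1 t)⁻¹ (hct t) Y⁆ =
        (eqv b).symm ⁅eqv b X, eqv b Y⁆ + ((max 1 t)⁻¹) ^ 2 • (Rb b X Y) := by
    intro t
    have h := key b hL ((max 1 t)⁻¹) (hct t)
    have h2 := LinearMap.congr_fun (LinearMap.congr_fun h X) Y
    simpa [pullBr, LinearMap.add_apply, LinearMap.smul_apply] using h2
  simp only [hkey]
  rw [Topology.IsEmbedding.subtypeVal.tendsto_nhds_iff]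
  have h1 : Filter.Tendsto (fun t : ℝ => max 1 t) Filter.atTop Filter.atTop :=
    tendsto_atTop_mono (fun t => le_max_right 1 t) tendsto_id
  have h0 : Filter.Tendsto (fun t : ℝ => (max 1 t)⁻¹) Filter.atTop (nhds 0) :=
    tendsto_inv_atTop_zero.comp h1
  have h2 : Filter.Tendsto (fun t : ℝ => ((max 1 t)⁻¹) ^ 2 • ((Rb b X Y : ↥so4) :
      Matrix (Fin 4) (Fin 4) ℝ)) Filter.atTop (nhds (((0:ℝ) ^ 2) • _)) :=
    (h0.pow 2).smul_const _
  have h3 : Filter.Tendsto (fun t : ℝ =>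
      (((eqv b).symm ⁅eqv b X, eqv b Y⁆ : ↥so4) : Matrix (Fin 4) (Fin 4) ℝ)
        + ((max 1 t)⁻¹) ^ 2 • ((Rb b X Y : ↥so4) : Matrix (Fin 4) (Fin 4) ℝ))
      Filter.atTop
      (nhds ((((eqv b).symm ⁅eqv b X, eqv b Y⁆ : ↥so4) : Matrix (Fin 4) (Fin 4) ℝ)
        + ((0:ℝ) ^ 2) • ((Rb b X Y : ↥so4) : Matrix (Fin 4) (Fin 4) ℝ))) :=
    Filter.Tendsto.add tendsto_const_nhds h2
  simpa [Function.comp_def, so4_coe_add, so4_coe_smul] using h3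
end

section
/- The Lorentz algebra so(3,1) contracts onto both the Lie algebra L_{6,1} (the inhomogeneous algebra Iso(3)) and the Lie algebra L_{6,4} (the inhomogeneous algebra Isl(2,ℝ)). -/
open Filter Topology

attribute [local instance 100] LieRing.ofAssociativeRing

/-- Structure constants of `L_{6,4}` (upper triangular part, 0-based indices). -/
def L64T {L : Type*} [AddCommGroup L] [Module ℝ L] (b : Fin 6 → L) : Fin 6 → Fin 6 → L :=
  fun i j =>
    if i = 0 ∧ j = 1 then (2 : ℝ) • b 1 else
    if i = 0 ∧ j = 2 then (-2 : ℝ) • b 2 else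
    if i = 1 ∧ j = 2 then b 0 else
    if i = 0 ∧ j = 3 then (2 : ℝ) • b 3 else
    if i = 0 ∧ j = 5 then (-2 : ℝ) • b 5 else
    if i = 1 ∧ j = 4 then (2 : ℝ) • b 3 else
    if i = 1 ∧ j = 5 then b 4 else
    if i = 2 ∧ j = 3 then b 4 else
    if i = 2 ∧ j = 4 then (2 : ℝ) • b 5 else 0

/-- `so(3,1)`: `4×4` real matrices `A` with `Aᵀ J + J A = 0`, `J = diag(1,1,1,-1)`. -/
noncomputable abbrev so31 : LieSubalgebra ℝ (Matrix (Fin 4) (Fin 4) ℝ) :=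
  skewAdjointMatricesLieSubalgebra (Matrix.diagonal ![1, 1, 1, -1])

/-! ### Auxiliary material for the contraction proof -/

open Matrix

section VecEval
variable {α : Type*} (a b c d e f : α)
lemma v4_2 : ![a,b,c,d] 2 = c := rfl
lemma v4_3 : ![a,b,c,d] 3 = d := rfl
lemma v6_2 : ![a,b,c,d,e,f] 2 = c := rfl
lemma v6_3 : ![a,b,c,d,e,f] 3 = d := rfl
lemma v6_4 : ![a,b,c,d,e,f] 4 = e := rfl
lemma v6_5 : ![a,b,c,d,e,f] 5 = f := rfl
end VecEval

lemma mem_so31_iff (A : Matrix (Fin 4) (Fin 4) ℝ) :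
    A ∈ so31 ↔ Aᵀ * (Matrix.diagonal ![1,1,1,-1]) = (Matrix.diagonal ![1,1,1,-1]) * (-A) := by
  rw [mem_skewAdjointMatricesLieSubalgebra, mem_skewAdjointMatricesSubmodule]; rfl

lemma so31_entry {A : Matrix (Fin 4) (Fin 4) ℝ} (hA : A ∈ so31) (i j : Fin 4) :
    A j i * (![1,1,1,-1] : Fin 4 → ℝ) j = (![1,1,1,-1] : Fin 4 → ℝ) i * -(A i j) := by
  have h := (mem_so31_iff A).mp hA
  have h2 := congrFun (congrFun h i) j
  simpa [Matrix.mul_diagonal, Matrix.diagonal_mul] using h2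

lemma so31_coe_smul (r : ℝ) (A : ↥so31) :
    ((r • A : ↥so31) : Matrix (Fin 4) (Fin 4) ℝ) = r • (A : Matrix (Fin 4) (Fin 4) ℝ) := rfl

def Mx1 (x : Fin 6 → ℝ) : Matrix (Fin 4) (Fin 4) ℝ :=
  !![0, -x 2, x 1, x 3; x 2, 0, -x 0, x 4; -x 1, x 0, 0, x 5; x 3, x 4, x 5, 0]

lemma Mx1_mem (x : Fin 6 → ℝ) : Mx1 x ∈ so31 := by
  rw [mem_so31_iff]
  ext i j
  fin_cases i <;> fin_cases j <;>
    simp [Mx1, Matrix.mul_diagonal, Matrix.diagonal_mul, Matrix.vecHead, Matrix.vecTail,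
      Matrix.transpose_apply, Function.comp]

def Mx2 (x : Fin 6 → ℝ) : Matrix (Fin 4) (Fin 4) ℝ :=
  !![0, -2*x 4, -x 3 + x 5, x 3 + x 5; 2*x 4, 0, -x 1 + x 2, x 1 + x 2;
     x 3 - x 5, x 1 - x 2, 0, 2*x 0; x 3 + x 5, x 1 + x 2, 2*x 0, 0]

lemma Mx2_mem (x : Fin 6 → ℝ) : Mx2 x ∈ so31 := by
  rw [mem_so31_iff]
  ext i j
  fin_cases i <;> fin_cases j <;>
    simp [Mx2, Matrix.mul_diagonal, Matrix.diagonal_mul, Matrix.vecHead, Matrix.vecTail,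
      Matrix.transpose_apply, Function.comp] <;> ring

def c1 (x y : Fin 6 → ℝ) : Fin 6 → ℝ :=
  ![x 1 * y 2 - x 2 * y 1 - (x 4 * y 5 - x 5 * y 4),
    -(x 0 * y 2 - x 2 * y 0) + (x 3 * y 5 - x 5 * y 3),
    x 0 * y 1 - x 1 * y 0 - (x 3 * y 4 - x 4 * y 3),
    (x 1 * y 5 - x 5 * y 1) - (x 2 * y 4 - x 4 * y 2),
    -(x 0 * y 5 - x 5 * y 0) + (x 2 * y 3 - x 3 * y 2),
    (x 0 * y 4 - x 4 * y 0) - (x 1 * y 3 - x 3 * y 1)]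

def clim1 (x y : Fin 6 → ℝ) : Fin 6 → ℝ :=
  ![x 1 * y 2 - x 2 * y 1,
    -(x 0 * y 2 - x 2 * y 0),
    x 0 * y 1 - x 1 * y 0,
    (x 1 * y 5 - x 5 * y 1) - (x 2 * y 4 - x 4 * y 2),
    -(x 0 * y 5 - x 5 * y 0) + (x 2 * y 3 - x 3 * y 2),
    (x 0 * y 4 - x 4 * y 0) - (x 1 * y 3 - x 3 * y 1)]

def c2 (x y : Fin 6 → ℝ) : Fin 6 → ℝ :=
  ![x 1 * y 2 - x 2 * y 1 + (x 3 * y 5 - x 5 * y 3),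
    2*(x 0 * y 1 - x 1 * y 0) - 2*(x 3 * y 4 - x 4 * y 3),
    -2*(x 0 * y 2 - x 2 * y 0) + 2*(x 4 * y 5 - x 5 * y 4),
    2*(x 0 * y 3 - x 3 * y 0) + 2*(x 1 * y 4 - x 4 * y 1),
    (x 1 * y 5 - x 5 * y 1) + (x 2 * y 3 - x 3 * y 2),
    -2*(x 0 * y 5 - x 5 * y 0) + 2*(x 2 * y 4 - x 4 * y 2)]

def clim2 (x y : Fin 6 → ℝ) : Fin 6 → ℝ :=
  ![x 1 * y 2 - x 2 * y 1,
    2*(x 0 * y 1 - x 1 * y 0),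
    -2*(x 0 * y 2 - x 2 * y 0),
    2*(x 0 * y 3 - x 3 * y 0) + 2*(x 1 * y 4 - x 4 * y 1),
    (x 1 * y 5 - x 5 * y 1) + (x 2 * y 3 - x 3 * y 2),
    -2*(x 0 * y 5 - x 5 * y 0) + 2*(x 2 * y 4 - x 4 * y 2)]

set_option maxHeartbeats 1600000 in
lemma br1 (x y : Fin 6 → ℝ) : Mx1 x * Mx1 y - Mx1 y * Mx1 x = Mx1 (c1 x y) := by
  ext i j
  fin_cases i <;> fin_cases j <;>
    simp [Mx1, c1, mul_apply, Fin.sum_univ_four, v4_2, v4_3, v6_2, v6_3, v6_4, v6_5] <;>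
    ring

set_option maxHeartbeats 1600000 in
lemma br2 (x y : Fin 6 → ℝ) : Mx2 x * Mx2 y - Mx2 y * Mx2 x = Mx2 (c2 x y) := by
  ext i j
  fin_cases i <;> fin_cases j <;>
    simp [Mx2, c2, mul_apply, Fin.sum_univ_four, v4_2, v4_3, v6_2, v6_3, v6_4, v6_5] <;>
    ring

noncomputable def co1 : (↥so31) ≃ₗ[ℝ] (Fin 6 → ℝ) where
  toFun A := ![A.val 2 1, A.val 0 2, A.val 1 0, A.val 0 3, A.val 1 3, A.val 2 3]
  map_add' A B := by
    funext i
    fin_cases i <;> simp [v6_2, v6_3, v6_4, v6_5]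
  map_smul' r A := by
    funext i
    fin_cases i <;>
      simp [v6_2, v6_3, v6_4, v6_5, so31_coe_smul, Matrix.smul_apply, smul_eq_mul]
  invFun x := ⟨Mx1 x, Mx1_mem x⟩
  left_inv A := by
    apply Subtype.ext
    have hA := A.2
    have h00 : A.val 0 0 = 0 := by have := so31_entry hA 0 0; simp at this; linarith
    have h11 : A.val 1 1 = 0 := by have := so31_entry hA 1 1; simp at this; linarith
    have h22 : A.val 2 2 = 0 := by have := so31_entry hA 2 2; simp [v4_2] at this; linarith
    have h33 : A.val 3 3 = 0 := by have := so31_entry hA 3 3; simp [v4_3] at this; linarith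
    have p01 : A.val 0 1 = -(A.val 1 0) := by have := so31_entry hA 1 0; simpa using this
    have p02 : A.val 0 2 = -(A.val 2 0) := by
      have := so31_entry hA 2 0; simp [v4_2] at this; linarith
    have p12 : A.val 1 2 = -(A.val 2 1) := by
      have := so31_entry hA 2 1; simp [v4_2] at this; linarith
    have p30 : A.val 3 0 = A.val 0 3 := by
      have := so31_entry hA 0 3; simp [v4_3] at this; linarith
    have p31 : A.val 3 1 = A.val 1 3 := by
      have := so31_entry hA 1 3; simp [v4_3] at this; linarith
    have p32 : A.val 3 2 = A.val 2 3 := by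
      have := so31_entry hA 2 3; simp [v4_2, v4_3] at this; linarith
    show Mx1 _ = A.val
    ext i j
    fin_cases i <;> fin_cases j <;>
      simp [Mx1, v6_2, v6_3, v6_4, v6_5, v4_2, v4_3] <;> linarith
  right_inv x := by
    funext i
    fin_cases i <;> simp [Mx1, v6_2, v6_3, v6_4, v6_5, v4_2, v4_3]

noncomputable def co2 : (↥so31) ≃ₗ[ℝ] (Fin 6 → ℝ) where
  toFun A := ![A.val 2 3 / 2, (A.val 1 3 - A.val 1 2)/2, (A.val 1 3 + A.val 1 2)/2,
    (A.val 0 3 - A.val 0 2)/2, A.val 1 0 / 2, (A.val 0 3 + A.val 0 2)/2]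
  map_add' A B := by
    funext i
    fin_cases i <;> simp [v6_2, v6_3, v6_4, v6_5] <;> ring
  map_smul' r A := by
    funext i
    fin_cases i <;>
      simp [v6_2, v6_3, v6_4, v6_5, so31_coe_smul, Matrix.smul_apply, smul_eq_mul] <;> ring
  invFun x := ⟨Mx2 x, Mx2_mem x⟩
  left_inv A := by
    apply Subtype.ext
    have hA := A.2
    have h00 : A.val 0 0 = 0 := by have := so31_entry hA 0 0; simp at this; linarith
    have h11 : A.val 1 1 = 0 := by have := so31_entry hA 1 1; simp at this; linarith
    have h22 : A.val 2 2 = 0 := by have := so31_entry hA 2 2; simp [v4_2] at this; linarith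
    have h33 : A.val 3 3 = 0 := by have := so31_entry hA 3 3; simp [v4_3] at this; linarith
    have p01 : A.val 0 1 = -(A.val 1 0) := by have := so31_entry hA 1 0; simpa using this
    have p02 : A.val 0 2 = -(A.val 2 0) := by
      have := so31_entry hA 2 0; simp [v4_2] at this; linarith
    have p12 : A.val 1 2 = -(A.val 2 1) := by
      have := so31_entry hA 2 1; simp [v4_2] at this; linarith
    have p30 : A.val 3 0 = A.val 0 3 := by
      have := so31_entry hA 0 3; simp [v4_3] at this; linarith
    have p31 : A.val 3 1 = A.val 1 3 := by
      have := so31_entry hA 1 3; simp [v4_3] at this; linarith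
    have p32 : A.val 3 2 = A.val 2 3 := by
      have := so31_entry hA 2 3; simp [v4_2, v4_3] at this; linarith
    show Mx2 _ = A.val
    ext i j
    fin_cases i <;> fin_cases j <;>
      simp [Mx2, v6_2, v6_3, v6_4, v6_5, v4_2, v4_3] <;> linarith
  right_inv x := by
    funext i
    fin_cases i <;> simp [Mx2, v6_2, v6_3, v6_4, v6_5, v4_2, v4_3] <;> ring

lemma hbr1 (x y : Fin 6 → ℝ) : ⁅co1.symm x, co1.symm y⁆ = co1.symm (c1 x y) := by
  apply Subtype.ext
  rw [LieSubalgebra.coe_bracket]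
  show ⁅Mx1 x, Mx1 y⁆ = Mx1 (c1 x y)
  rw [Ring.lie_def]
  exact br1 x y

lemma hbr2 (x y : Fin 6 → ℝ) : ⁅co2.symm x, co2.symm y⁆ = co2.symm (c2 x y) := by
  apply Subtype.ext
  rw [LieSubalgebra.coe_bracket]
  show ⁅Mx2 x, Mx2 y⁆ = Mx2 (c2 x y)
  rw [Ring.lie_def]
  exact br2 x y

lemma hcont1 : Continuous fun v : Fin 6 → ℝ => ((co1.symm v : ↥so31) : Matrix (Fin 4) (Fin 4) ℝ) := by
  have h : (fun v : Fin 6 → ℝ => ((co1.symm v : ↥so31) : Matrix (Fin 4) (Fin 4) ℝ))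
      = fun v => Mx1 v := rfl
  rw [h]
  apply continuous_matrix
  intro i j
  fin_cases i <;> fin_cases j <;> simp [Mx1, v6_2, v6_3, v6_4, v6_5, v4_2, v4_3] <;> fun_prop

lemma hcont2 : Continuous fun v : Fin 6 → ℝ => ((co2.symm v : ↥so31) : Matrix (Fin 4) (Fin 4) ℝ) := by
  have h : (fun v : Fin 6 → ℝ => ((co2.symm v : ↥so31) : Matrix (Fin 4) (Fin 4) ℝ))
      = fun v => Mx2 v := rfl
  rw [h]
  apply continuous_matrix
  intro i j
  fin_cases i <;> fin_cases j <;> simp [Mx2, v6_2, v6_3, v6_4, v6_5, v4_2, v4_3] <;> fun_prop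

noncomputable def sc (t : ℝ) (k : Fin 6) : ℝ := if (k : ℕ) < 3 then 1 else (1 + t^2)⁻¹

lemma one_add_sq_ne (t : ℝ) : (1 : ℝ) + t^2 ≠ 0 := by positivity

lemma sc_ne (t : ℝ) (k : Fin 6) : sc t k ≠ 0 := by
  unfold sc; split
  · norm_num
  · exact inv_ne_zero (one_add_sq_ne t)

lemma sc_lt0 (t : ℝ) : sc t 0 = 1 := rfl
lemma sc_lt1 (t : ℝ) : sc t 1 = 1 := rfl
lemma sc_lt2 (t : ℝ) : sc t 2 = 1 := rfl
lemma sc_ge3 (t : ℝ) : sc t 3 = (1 + t^2)⁻¹ := rfl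
lemma sc_ge4 (t : ℝ) : sc t 4 = (1 + t^2)⁻¹ := rfl
lemma sc_ge5 (t : ℝ) : sc t 5 = (1 + t^2)⁻¹ := rfl

noncomputable def scaleE (t : ℝ) : (Fin 6 → ℝ) ≃ₗ[ℝ] (Fin 6 → ℝ) where
  toFun x := fun i => sc t i * x i
  invFun x := fun i => (sc t i)⁻¹ * x i
  map_add' x y := by funext i; simp [mul_add]
  map_smul' r x := by funext i; simp [smul_eq_mul]; ring
  left_inv x := by funext i; simp [← mul_assoc, inv_mul_cancel₀ (sc_ne t i)]
  right_inv x := by funext i; simp [← mul_assoc, mul_inv_cancel₀ (sc_ne t i)]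

theorem isContraction_aux (co : (↥so31) ≃ₗ[ℝ] (Fin 6 → ℝ))
    (c cl : (Fin 6 → ℝ) → (Fin 6 → ℝ) → Fin 6 → ℝ)
    (hbr : ∀ x y, ⁅co.symm x, co.symm y⁆ = co.symm (c x y))
    (hcont : Continuous fun v : Fin 6 → ℝ => ((co.symm v : ↥so31) : Matrix (Fin 4) (Fin 4) ℝ))
    (L : Type*) [LieRing L] [LieAlgebra ℝ L] (b : Module.Basis (Fin 6) ℝ L)
    (hcl : ∀ x y : Fin 6 → ℝ, ⁅b.equivFun.symm x, b.equivFun.symm y⁆ = b.equivFun.symm (cl x y))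
    (hlim : ∀ x y : Fin 6 → ℝ,
      Filter.Tendsto (fun t : ℝ => fun k => (sc t k)⁻¹ *
          c (fun i => sc t i * x i) (fun i => sc t i * y i) k) Filter.atTop (nhds (cl x y))) :
    IsContraction (↥so31) L := by
  refine ⟨fun t => (co.trans (scaleE t)).trans co.symm, co.trans b.equivFun.symm, ?_⟩
  intro X Y
  have hfun : ∀ t : ℝ, ((co.trans (scaleE t)).trans co.symm).symm
      ⁅((co.trans (scaleE t)).trans co.symm) X, ((co.trans (scaleE t)).trans co.symm) Y⁆
      = co.symm (fun k => (sc t k)⁻¹ *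
          c (fun i => sc t i * (co X) i) (fun i => sc t i * (co Y) i) k) := by
    intro t
    simp only [LinearEquiv.trans_apply, LinearEquiv.symm_trans_apply, LinearEquiv.symm_symm]
    rw [show (scaleE t) (co X) = (fun i => sc t i * (co X) i) from rfl,
        show (scaleE t) (co Y) = (fun i => sc t i * (co Y) i) from rfl, hbr,
        LinearEquiv.apply_symm_apply]
    rfl
  have hpt : (co.trans b.equivFun.symm).symm
      ⁅(co.trans b.equivFun.symm) X, (co.trans b.equivFun.symm) Y⁆
      = co.symm (cl (co X) (co Y)) := by
    simp only [LinearEquiv.trans_apply, LinearEquiv.symm_trans_apply, LinearEquiv.symm_symm]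
    rw [hcl, LinearEquiv.apply_symm_apply]
  simp only [hfun, hpt]
  rw [tendsto_subtype_rng]
  exact (hcont.tendsto _).comp (hlim (co X) (co Y))

lemma key_tendsto : Filter.Tendsto (fun t : ℝ => ((1+t^2)⁻¹ * (1+t^2)⁻¹)) Filter.atTop (nhds 0) := by
  have h1 : Filter.Tendsto (fun t : ℝ => 1 + t^2) Filter.atTop Filter.atTop :=
    tendsto_atTop_add_const_left _ 1 (tendsto_pow_atTop two_ne_zero)
  have h2 : Filter.Tendsto (fun t : ℝ => (1+t^2)⁻¹) Filter.atTop (nhds 0) :=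
    tendsto_inv_atTop_zero.comp h1
  simpa using h2.mul h2

section Components

variable (x y : Fin 6 → ℝ)

lemma comp1_0 :
    Filter.Tendsto (fun t : ℝ => (sc t 0)⁻¹ *
      c1 (fun i => sc t i * x i) (fun i => sc t i * y i) 0) Filter.atTop (nhds (clim1 x y 0)) := by
  have base : Filter.Tendsto (fun t : ℝ => (x 1 * y 2 - x 2 * y 1)
      + ((1+t^2)⁻¹ * (1+t^2)⁻¹) * (x 5 * y 4 - x 4 * y 5)) Filter.atTop (nhds (clim1 x y 0)) := by
    simpa [clim1] using tendsto_const_nhds.add (key_tendsto.mul_const (x 5 * y 4 - x 4 * y 5))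
  refine base.congr fun t => ?_
  simp [sc_lt0, sc_lt1, sc_lt2, sc_ge3, sc_ge4, sc_ge5, c1, v6_2, v6_3, v6_4, v6_5]
  ring

lemma comp1_1 :
    Filter.Tendsto (fun t : ℝ => (sc t 1)⁻¹ *
      c1 (fun i => sc t i * x i) (fun i => sc t i * y i) 1) Filter.atTop (nhds (clim1 x y 1)) := by
  have base : Filter.Tendsto (fun t : ℝ => (-(x 0 * y 2 - x 2 * y 0))
      + ((1+t^2)⁻¹ * (1+t^2)⁻¹) * (x 3 * y 5 - x 5 * y 3)) Filter.atTop (nhds (clim1 x y 1)) := by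
    simpa [clim1] using tendsto_const_nhds.add (key_tendsto.mul_const (x 3 * y 5 - x 5 * y 3))
  refine base.congr fun t => ?_
  simp [sc_lt0, sc_lt1, sc_lt2, sc_ge3, sc_ge4, sc_ge5, c1, v6_2, v6_3, v6_4, v6_5]
  ring

lemma comp1_2 :
    Filter.Tendsto (fun t : ℝ => (sc t 2)⁻¹ *
      c1 (fun i => sc t i * x i) (fun i => sc t i * y i) 2) Filter.atTop (nhds (clim1 x y 2)) := by
  have base : Filter.Tendsto (fun t : ℝ => (x 0 * y 1 - x 1 * y 0)
      + ((1+t^2)⁻¹ * (1+t^2)⁻¹) * (x 4 * y 3 - x 3 * y 4)) Filter.atTop (nhds (clim1 x y 2)) := by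
    simpa [clim1] using tendsto_const_nhds.add (key_tendsto.mul_const (x 4 * y 3 - x 3 * y 4))
  refine base.congr fun t => ?_
  simp [sc_lt0, sc_lt1, sc_lt2, sc_ge3, sc_ge4, sc_ge5, c1, v6_2, v6_3, v6_4, v6_5]
  ring

lemma comp1_3 :
    Filter.Tendsto (fun t : ℝ => (sc t 3)⁻¹ *
      c1 (fun i => sc t i * x i) (fun i => sc t i * y i) 3) Filter.atTop (nhds (clim1 x y 3)) := by
  refine Filter.Tendsto.congr (fun t => ?_) tendsto_const_nhds
  have ht := one_add_sq_ne t
  simp [sc_lt0, sc_lt1, sc_lt2, sc_ge3, sc_ge4, sc_ge5, c1, clim1, v6_2, v6_3, v6_4, v6_5]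
  all_goals field_simp
  all_goals ring

lemma comp1_4 :
    Filter.Tendsto (fun t : ℝ => (sc t 4)⁻¹ *
      c1 (fun i => sc t i * x i) (fun i => sc t i * y i) 4) Filter.atTop (nhds (clim1 x y 4)) := by
  refine Filter.Tendsto.congr (fun t => ?_) tendsto_const_nhds
  have ht := one_add_sq_ne t
  simp [sc_lt0, sc_lt1, sc_lt2, sc_ge3, sc_ge4, sc_ge5, c1, clim1, v6_2, v6_3, v6_4, v6_5]
  all_goals field_simp
  all_goals ring

lemma comp1_5 :
    Filter.Tendsto (fun t : ℝ => (sc t 5)⁻¹ *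
      c1 (fun i => sc t i * x i) (fun i => sc t i * y i) 5) Filter.atTop (nhds (clim1 x y 5)) := by
  refine Filter.Tendsto.congr (fun t => ?_) tendsto_const_nhds
  have ht := one_add_sq_ne t
  simp [sc_lt0, sc_lt1, sc_lt2, sc_ge3, sc_ge4, sc_ge5, c1, clim1, v6_2, v6_3, v6_4, v6_5]
  all_goals field_simp
  all_goals ring

lemma comp2_0 :
    Filter.Tendsto (fun t : ℝ => (sc t 0)⁻¹ *
      c2 (fun i => sc t i * x i) (fun i => sc t i * y i) 0) Filter.atTop (nhds (clim2 x y 0)) := by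
  have base : Filter.Tendsto (fun t : ℝ => (x 1 * y 2 - x 2 * y 1)
      + ((1+t^2)⁻¹ * (1+t^2)⁻¹) * (x 3 * y 5 - x 5 * y 3)) Filter.atTop (nhds (clim2 x y 0)) := by
    simpa [clim2] using tendsto_const_nhds.add (key_tendsto.mul_const (x 3 * y 5 - x 5 * y 3))
  refine base.congr fun t => ?_
  simp [sc_lt0, sc_lt1, sc_lt2, sc_ge3, sc_ge4, sc_ge5, c2, v6_2, v6_3, v6_4, v6_5]
  ring

lemma comp2_1 :
    Filter.Tendsto (fun t : ℝ => (sc t 1)⁻¹ *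
      c2 (fun i => sc t i * x i) (fun i => sc t i * y i) 1) Filter.atTop (nhds (clim2 x y 1)) := by
  have base : Filter.Tendsto (fun t : ℝ => (2*(x 0 * y 1 - x 1 * y 0))
      + ((1+t^2)⁻¹ * (1+t^2)⁻¹) * (2*(x 4 * y 3 - x 3 * y 4))) Filter.atTop
      (nhds (clim2 x y 1)) := by
    simpa [clim2] using tendsto_const_nhds.add (key_tendsto.mul_const (2*(x 4 * y 3 - x 3 * y 4)))
  refine base.congr fun t => ?_
  simp [sc_lt0, sc_lt1, sc_lt2, sc_ge3, sc_ge4, sc_ge5, c2, v6_2, v6_3, v6_4, v6_5]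
  ring

lemma comp2_2 :
    Filter.Tendsto (fun t : ℝ => (sc t 2)⁻¹ *
      c2 (fun i => sc t i * x i) (fun i => sc t i * y i) 2) Filter.atTop (nhds (clim2 x y 2)) := by
  have base : Filter.Tendsto (fun t : ℝ => (-2*(x 0 * y 2 - x 2 * y 0))
      + ((1+t^2)⁻¹ * (1+t^2)⁻¹) * (2*(x 4 * y 5 - x 5 * y 4))) Filter.atTop
      (nhds (clim2 x y 2)) := by
    simpa [clim2] using tendsto_const_nhds.add (key_tendsto.mul_const (2*(x 4 * y 5 - x 5 * y 4)))
  refine base.congr fun t => ?_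
  simp [sc_lt0, sc_lt1, sc_lt2, sc_ge3, sc_ge4, sc_ge5, c2, v6_2, v6_3, v6_4, v6_5]
  ring

lemma comp2_3 :
    Filter.Tendsto (fun t : ℝ => (sc t 3)⁻¹ *
      c2 (fun i => sc t i * x i) (fun i => sc t i * y i) 3) Filter.atTop (nhds (clim2 x y 3)) := by
  refine Filter.Tendsto.congr (fun t => ?_) tendsto_const_nhds
  have ht := one_add_sq_ne t
  simp [sc_lt0, sc_lt1, sc_lt2, sc_ge3, sc_ge4, sc_ge5, c2, clim2, v6_2, v6_3, v6_4, v6_5]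
  all_goals field_simp
  all_goals ring

lemma comp2_4 :
    Filter.Tendsto (fun t : ℝ => (sc t 4)⁻¹ *
      c2 (fun i => sc t i * x i) (fun i => sc t i * y i) 4) Filter.atTop (nhds (clim2 x y 4)) := by
  refine Filter.Tendsto.congr (fun t => ?_) tendsto_const_nhds
  have ht := one_add_sq_ne t
  simp [sc_lt0, sc_lt1, sc_lt2, sc_ge3, sc_ge4, sc_ge5, c2, clim2, v6_2, v6_3, v6_4, v6_5]
  all_goals field_simp
  all_goals ring

lemma comp2_5 :
    Filter.Tendsto (fun t : ℝ => (sc t 5)⁻¹ *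
      c2 (fun i => sc t i * x i) (fun i => sc t i * y i) 5) Filter.atTop (nhds (clim2 x y 5)) := by
  refine Filter.Tendsto.congr (fun t => ?_) tendsto_const_nhds
  have ht := one_add_sq_ne t
  simp [sc_lt0, sc_lt1, sc_lt2, sc_ge3, sc_ge4, sc_ge5, c2, clim2, v6_2, v6_3, v6_4, v6_5]
  all_goals field_simp
  all_goals ring

lemma hlim1 :
    Filter.Tendsto (fun t : ℝ => fun k => (sc t k)⁻¹ *
      c1 (fun i => sc t i * x i) (fun i => sc t i * y i) k) Filter.atTop (nhds (clim1 x y)) := by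
  rw [tendsto_pi_nhds]
  intro k
  fin_cases k
  · exact comp1_0 x y
  · exact comp1_1 x y
  · exact comp1_2 x y
  · exact comp1_3 x y
  · exact comp1_4 x y
  · exact comp1_5 x y

lemma hlim2 :
    Filter.Tendsto (fun t : ℝ => fun k => (sc t k)⁻¹ *
      c2 (fun i => sc t i * x i) (fun i => sc t i * y i) k) Filter.atTop (nhds (clim2 x y)) := by
  rw [tendsto_pi_nhds]
  intro k
  fin_cases k
  · exact comp2_0 x y
  · exact comp2_1 x y
  · exact comp2_2 x y
  · exact comp2_3 x y
  · exact comp2_4 x y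
  · exact comp2_5 x y

end Components

/-- The Lorentz algebra `so(3,1)` contracts onto both `L_{6,1} = Iso(3)` and
`L_{6,4} = Isl(2,ℝ)`. -/
theorem so31_contracts_onto_L61_and_L64
    (L : Type) [LieRing L] [LieAlgebra ℝ L] (b : Module.Basis (Fin 6) ℝ L)
    (hL : ∀ i j : Fin 6, i < j → ⁅b i, b j⁆ = L61T (⇑b) i j)
    (M : Type) [LieRing M] [LieAlgebra ℝ M] (c : Module.Basis (Fin 6) ℝ M)
    (hM : ∀ i j : Fin 6, i < j → ⁅c i, c j⁆ = L64T (⇑c) i j) :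
    IsContraction (↥so31) L ∧ IsContraction (↥so31) M := by
  constructor
  · refine isContraction_aux co1 c1 clim1 hbr1 hcont1 L b ?_ (hlim1)
    have h01 : ⁅b 0, b 1⁆ = b 2 := by simpa [L61T] using hL 0 1 (by decide)
    have h02 : ⁅b 0, b 2⁆ = -b 1 := by simpa [L61T] using hL 0 2 (by decide)
    have h03 : ⁅b 0, b 3⁆ = 0 := by simpa [L61T] using hL 0 3 (by decide)
    have h04 : ⁅b 0, b 4⁆ = b 5 := by simpa [L61T] using hL 0 4 (by decide)
    have h05 : ⁅b 0, b 5⁆ = -b 4 := by simpa [L61T] using hL 0 5 (by decide)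
    have h12 : ⁅b 1, b 2⁆ = b 0 := by simpa [L61T] using hL 1 2 (by decide)
    have h13 : ⁅b 1, b 3⁆ = -b 5 := by simpa [L61T] using hL 1 3 (by decide)
    have h14 : ⁅b 1, b 4⁆ = 0 := by simpa [L61T] using hL 1 4 (by decide)
    have h15 : ⁅b 1, b 5⁆ = b 3 := by simpa [L61T] using hL 1 5 (by decide)
    have h23 : ⁅b 2, b 3⁆ = b 4 := by simpa [L61T] using hL 2 3 (by decide)
    have h24 : ⁅b 2, b 4⁆ = -b 3 := by simpa [L61T] using hL 2 4 (by decide)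
    have h25 : ⁅b 2, b 5⁆ = 0 := by simpa [L61T] using hL 2 5 (by decide)
    have h34 : ⁅b 3, b 4⁆ = 0 := by simpa [L61T] using hL 3 4 (by decide)
    have h35 : ⁅b 3, b 5⁆ = 0 := by simpa [L61T] using hL 3 5 (by decide)
    have h45 : ⁅b 4, b 5⁆ = 0 := by simpa [L61T] using hL 4 5 (by decide)
    have n10 : ⁅b 1, b 0⁆ = -b 2 := by rw [← lie_skew, h01]
    have n20 : ⁅b 2, b 0⁆ = -(-b 1) := by rw [← lie_skew, h02]
    have n30 : ⁅b 3, b 0⁆ = -(0 : L) := by rw [← lie_skew, h03]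
    have n40 : ⁅b 4, b 0⁆ = -b 5 := by rw [← lie_skew, h04]
    have n50 : ⁅b 5, b 0⁆ = -(-b 4) := by rw [← lie_skew, h05]
    have n21 : ⁅b 2, b 1⁆ = -b 0 := by rw [← lie_skew, h12]
    have n31 : ⁅b 3, b 1⁆ = -(-b 5) := by rw [← lie_skew, h13]
    have n41 : ⁅b 4, b 1⁆ = -(0 : L) := by rw [← lie_skew, h14]
    have n51 : ⁅b 5, b 1⁆ = -b 3 := by rw [← lie_skew, h15]
    have n32 : ⁅b 3, b 2⁆ = -b 4 := by rw [← lie_skew, h23]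
    have n42 : ⁅b 4, b 2⁆ = -(-b 3) := by rw [← lie_skew, h24]
    have n52 : ⁅b 5, b 2⁆ = -(0 : L) := by rw [← lie_skew, h25]
    have n43 : ⁅b 4, b 3⁆ = -(0 : L) := by rw [← lie_skew, h34]
    have n53 : ⁅b 5, b 3⁆ = -(0 : L) := by rw [← lie_skew, h35]
    have n54 : ⁅b 5, b 4⁆ = -(0 : L) := by rw [← lie_skew, h45]
    intro x y
    simp only [Module.Basis.equivFun_symm_apply, Fin.sum_univ_six]
    simp only [lie_add, add_lie, lie_smul, smul_lie, lie_self,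
      h01, h02, h03, h04, h05, h12, h13, h14, h15, h23, h24, h25, h34, h35, h45,
      n10, n20, n30, n40, n50, n21, n31, n41, n51, n32, n42, n52, n43, n53, n54,
      neg_neg, neg_zero, smul_zero, add_zero, zero_add, smul_neg]
    simp only [clim1, Matrix.cons_val_zero, Matrix.cons_val_one, Matrix.head_cons,
      v6_2, v6_3, v6_4, v6_5]
    module
  · refine isContraction_aux co2 c2 clim2 hbr2 hcont2 M c ?_ (hlim2)
    have h01 : ⁅c 0, c 1⁆ = (2:ℝ) • c 1 := by simpa [L64T] using hM 0 1 (by decide)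
    have h02 : ⁅c 0, c 2⁆ = (-2:ℝ) • c 2 := by simpa [L64T] using hM 0 2 (by decide)
    have h03 : ⁅c 0, c 3⁆ = (2:ℝ) • c 3 := by simpa [L64T] using hM 0 3 (by decide)
    have h04 : ⁅c 0, c 4⁆ = 0 := by simpa [L64T] using hM 0 4 (by decide)
    have h05 : ⁅c 0, c 5⁆ = (-2:ℝ) • c 5 := by simpa [L64T] using hM 0 5 (by decide)
    have h12 : ⁅c 1, c 2⁆ = c 0 := by simpa [L64T] using hM 1 2 (by decide)
    have h13 : ⁅c 1, c 3⁆ = 0 := by simpa [L64T] using hM 1 3 (by decide)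
    have h14 : ⁅c 1, c 4⁆ = (2:ℝ) • c 3 := by simpa [L64T] using hM 1 4 (by decide)
    have h15 : ⁅c 1, c 5⁆ = c 4 := by simpa [L64T] using hM 1 5 (by decide)
    have h23 : ⁅c 2, c 3⁆ = c 4 := by simpa [L64T] using hM 2 3 (by decide)
    have h24 : ⁅c 2, c 4⁆ = (2:ℝ) • c 5 := by simpa [L64T] using hM 2 4 (by decide)
    have h25 : ⁅c 2, c 5⁆ = 0 := by simpa [L64T] using hM 2 5 (by decide)
    have h34 : ⁅c 3, c 4⁆ = 0 := by simpa [L64T] using hM 3 4 (by decide)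
    have h35 : ⁅c 3, c 5⁆ = 0 := by simpa [L64T] using hM 3 5 (by decide)
    have h45 : ⁅c 4, c 5⁆ = 0 := by simpa [L64T] using hM 4 5 (by decide)
    have n10 : ⁅c 1, c 0⁆ = -((2:ℝ) • c 1) := by rw [← lie_skew, h01]
    have n20 : ⁅c 2, c 0⁆ = -((-2:ℝ) • c 2) := by rw [← lie_skew, h02]
    have n30 : ⁅c 3, c 0⁆ = -((2:ℝ) • c 3) := by rw [← lie_skew, h03]
    have n40 : ⁅c 4, c 0⁆ = -(0 : M) := by rw [← lie_skew, h04]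
    have n50 : ⁅c 5, c 0⁆ = -((-2:ℝ) • c 5) := by rw [← lie_skew, h05]
    have n21 : ⁅c 2, c 1⁆ = -c 0 := by rw [← lie_skew, h12]
    have n31 : ⁅c 3, c 1⁆ = -(0 : M) := by rw [← lie_skew, h13]
    have n41 : ⁅c 4, c 1⁆ = -((2:ℝ) • c 3) := by rw [← lie_skew, h14]
    have n51 : ⁅c 5, c 1⁆ = -c 4 := by rw [← lie_skew, h15]
    have n32 : ⁅c 3, c 2⁆ = -c 4 := by rw [← lie_skew, h23]
    have n42 : ⁅c 4, c 2⁆ = -((2:ℝ) • c 5) := by rw [← lie_skew, h24]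
    have n52 : ⁅c 5, c 2⁆ = -(0 : M) := by rw [← lie_skew, h25]
    have n43 : ⁅c 4, c 3⁆ = -(0 : M) := by rw [← lie_skew, h34]
    have n53 : ⁅c 5, c 3⁆ = -(0 : M) := by rw [← lie_skew, h35]
    have n54 : ⁅c 5, c 4⁆ = -(0 : M) := by rw [← lie_skew, h45]
    intro x y
    simp only [Module.Basis.equivFun_symm_apply, Fin.sum_univ_six]
    simp only [lie_add, add_lie, lie_smul, smul_lie, lie_self,
      h01, h02, h03, h04, h05, h12, h13, h14, h15, h23, h24, h25, h34, h35, h45,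
      n10, n20, n30, n40, n50, n21, n31, n41, n51, n32, n42, n52, n43, n53, n54,
      neg_neg, neg_zero, smul_zero, add_zero, zero_add, smul_neg]
    simp only [clim2, Matrix.cons_val_zero, Matrix.cons_val_one, Matrix.head_cons,
      v6_2, v6_3, v6_4, v6_5]
    module
end
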